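/- For every concave g : ℝ^k → ℝ and every fixed b ∈ (ℝ≥0)^k, the map ξ ↦ G(g, b, ξ) is concave on the convex set of families ξ = (ξ_i)_i with ξ_i : V_{-i} → ℝ≥0: for all such families ξ, ξ' and θ ∈ [0,1], G(g, b, θ·ξ + (1−θ)·ξ') ≥ θ·G(g, b, ξ) + (1−θ)·G(g, b, ξ'). -/

import Mathlib

open Finset

namespace SinglePeriod

/-- A single-period setting with `k` buyers: finite nonnegative value spaces and
full-support probability mass functions, independent across buyers. -/
structure Setting (k : ℕ) where
  V : Fin k → Finset ℝ
  V_nonempty : ∀ i, (V i).Nonempty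
  V_nonneg : ∀ i, ∀ s ∈ V i, (0 : ℝ) ≤ s
  f : Fin k → ℝ → ℝ
  f_pos : ∀ i, ∀ s ∈ V i, 0 < f i s
  f_sum : ∀ i, ∑ s ∈ V i, f i s = 1

variable {k : ℕ}

/-- The finite set of all (valid) value profiles. -/
noncomputable def profiles (S : Setting k) : Finset (Fin k → ℝ) :=
  Fintype.piFinset fun i => S.V i

/-- Probability of a value profile (independent coordinates). -/
noncomputable def prob (S : Setting k) (v : Fin k → ℝ) : ℝ := ∏ i, S.f i (v i)

/-- The largest element of `V i` strictly below `s`, or `0` if none exists. -/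
noncomputable def predV (S : Setting k) (i : Fin k) (s : ℝ) : ℝ :=
  WithBot.unbotD 0 (((S.V i).filter fun s' => s' < s).max)

/-- An allocation rule. -/
abbrev Alloc (k : ℕ) := (Fin k → ℝ) → Fin k → ℝ

/-- A family `ξ = (ξ_i)_i` of per-buyer expected utilities; `ξ i v` is required to
depend only on `v_{-i}` (see `ValidXi`). -/
abbrev Util (k : ℕ) := Fin k → (Fin k → ℝ) → ℝ

/-- `ξ` is a valid family: nonnegative and `ξ i` depends only on the coordinates
other than `i`. -/
def ValidXi (S : Setting k) (ξ : Util k) : Prop :=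
  (∀ i v, 0 ≤ ξ i v) ∧
  (∀ (i : Fin k) (v : Fin k → ℝ) (s : ℝ), ξ i (Function.update v i s) = ξ i v)

/-- Envelope utility `u'_i(v) = Σ_{s ∈ V_i, s ≤ v_i} x_i(s, v_{-i}) (s - pred s)`. -/
noncomputable def envU (S : Setting k) (x : Alloc k) (i : Fin k) (v : Fin k → ℝ) : ℝ :=
  ∑ s ∈ (S.V i).filter (fun s => s ≤ v i), x (Function.update v i s) i * (s - predV S i s)

/-- `ū'_i(v_{-i}) = E_{v_i}[u'_i(v)]`. -/
noncomputable def envUbar (S : Setting k) (x : Alloc k) (i : Fin k) (v : Fin k → ℝ) : ℝ :=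
  ∑ s ∈ S.V i, S.f i s * envU S x i (Function.update v i s)

/-- Balance increment `Δb_i(v) = u'_i(v) - ū'_i(v_{-i}) + ξ_i(v_{-i})`. -/
noncomputable def deltaB (S : Setting k) (x : Alloc k) (ξ : Util k)
    (v : Fin k → ℝ) (i : Fin k) : ℝ :=
  envU S x i v - envUbar S x i v + ξ i v

/-- The objective of the single-period program `P(g, b, ξ)` at allocation `x`. -/
noncomputable def obj (S : Setting k) (g : (Fin k → ℝ) → ℝ) (b : Fin k → ℝ)
    (ξ : Util k) (x : Alloc k) : ℝ :=
  ∑ v ∈ profiles S, prob S v *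
    ((∑ i, (v i * x v i - ξ i v)) + g (fun i => deltaB S x ξ v i + b i))

/-- Feasibility for the single-period program `P(g, b, ξ)`: allocation bounds,
feasibility, monotonicity, and the balance constraint. -/
def Feasible (S : Setting k) (b : Fin k → ℝ) (ξ : Util k) (x : Alloc k) : Prop :=
  (∀ v ∈ profiles S, ∀ i, 0 ≤ x v i ∧ x v i ≤ 1) ∧
  (∀ v ∈ profiles S, ∑ i, x v i ≤ 1) ∧
  (∀ (i : Fin k), ∀ v ∈ profiles S, ∀ s ∈ S.V i, ∀ s' ∈ S.V i, s ≤ s' →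
    x (Function.update v i s) i ≤ x (Function.update v i s') i) ∧
  (∀ (i : Fin k), ∀ v ∈ profiles S, envUbar S x i v ≤ b i + ξ i v)

/-- `G(g, b, ξ)`: the optimal value (supremum) of the program `P(g, b, ξ)`. -/
noncomputable def G (S : Setting k) (g : (Fin k → ℝ) → ℝ) (b : Fin k → ℝ)
    (ξ : Util k) : ℝ :=
  sSup {r : ℝ | ∃ x : Alloc k, Feasible S b ξ x ∧ r = obj S g b ξ x}


/-! ### Auxiliary lemmas -/

lemma mem_profiles_iff (S : Setting k) {v : Fin k → ℝ} :
    v ∈ profiles S ↔ ∀ i, v i ∈ S.V i := Fintype.mem_piFinset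

lemma update_mem_profiles (S : Setting k) {v : Fin k → ℝ} (hv : v ∈ profiles S)
    {i : Fin k} {s : ℝ} (hs : s ∈ S.V i) : Function.update v i s ∈ profiles S := by
  rw [mem_profiles_iff] at hv ⊢
  intro j
  rcases eq_or_ne j i with rfl | hj
  · simpa using hs
  · simpa [Function.update_of_ne hj] using hv j

lemma prob_nonneg (S : Setting k) {v : Fin k → ℝ} (hv : v ∈ profiles S) :
    0 ≤ prob S v :=
  Finset.prod_nonneg fun i _ => (S.f_pos i _ ((mem_profiles_iff S).1 hv i)).le

lemma predV_nonneg (S : Setting k) (i : Fin k) (s : ℝ) : 0 ≤ predV S i s := by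
  unfold predV
  rcases h : ((S.V i).filter fun s' => s' < s).max with _ | m
  · exact le_rfl
  · have hm := Finset.mem_of_max h
    simp only [Finset.mem_filter] at hm
    exact S.V_nonneg i m hm.1

lemma predV_le (S : Setting k) {i : Fin k} {s : ℝ} (hs : s ∈ S.V i) :
    predV S i s ≤ s := by
  unfold predV
  rcases h : ((S.V i).filter fun s' => s' < s).max with _ | m
  · exact S.V_nonneg i s hs
  · have hm := Finset.mem_of_max h
    simp only [Finset.mem_filter] at hm
    exact hm.2.le

lemma envU_comb (S : Setting k) (x x' : Alloc k) (θ : ℝ) (i : Fin k) (v : Fin k → ℝ) :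
    envU S (fun w j => θ * x w j + (1 - θ) * x' w j) i v
      = θ * envU S x i v + (1 - θ) * envU S x' i v := by
  unfold envU
  rw [Finset.mul_sum, Finset.mul_sum, ← Finset.sum_add_distrib]
  exact Finset.sum_congr rfl fun s _ => by ring

lemma envUbar_comb (S : Setting k) (x x' : Alloc k) (θ : ℝ) (i : Fin k) (v : Fin k → ℝ) :
    envUbar S (fun w j => θ * x w j + (1 - θ) * x' w j) i v
      = θ * envUbar S x i v + (1 - θ) * envUbar S x' i v := by
  unfold envUbar
  rw [Finset.mul_sum, Finset.mul_sum, ← Finset.sum_add_distrib]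
  refine Finset.sum_congr rfl fun s _ => ?_
  rw [envU_comb]; ring

lemma deltaB_comb (S : Setting k) (x x' : Alloc k) (ξ ξ' : Util k) (θ : ℝ)
    (v : Fin k → ℝ) (i : Fin k) :
    deltaB S (fun w j => θ * x w j + (1 - θ) * x' w j)
      (fun j w => θ * ξ j w + (1 - θ) * ξ' j w) v i
      = θ * deltaB S x ξ v i + (1 - θ) * deltaB S x' ξ' v i := by
  unfold deltaB
  rw [envU_comb, envUbar_comb]; ring

lemma feasible_comb (S : Setting k) {b : Fin k → ℝ} {ξ ξ' : Util k} {x x' : Alloc k}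
    (hx : Feasible S b ξ x) (hx' : Feasible S b ξ' x')
    {θ : ℝ} (hθ0 : 0 ≤ θ) (hθ1 : θ ≤ 1) :
    Feasible S b (fun j w => θ * ξ j w + (1 - θ) * ξ' j w)
      (fun w j => θ * x w j + (1 - θ) * x' w j) := by
  obtain ⟨h1, h2, h3, h4⟩ := hx
  obtain ⟨h1', h2', h3', h4'⟩ := hx'
  have h1θ : 0 ≤ 1 - θ := by linarith
  refine ⟨?_, ?_, ?_, ?_⟩
  · intro v hv i
    obtain ⟨ha, hb1⟩ := h1 v hv i
    obtain ⟨ha', hb'⟩ := h1' v hv i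
    dsimp only
    constructor
    · have := mul_nonneg hθ0 ha
      have := mul_nonneg h1θ ha'
      linarith
    · have := mul_le_mul_of_nonneg_left hb1 hθ0
      have := mul_le_mul_of_nonneg_left hb' h1θ
      linarith
  · intro v hv
    have : ∑ i, (θ * x v i + (1 - θ) * x' v i)
        = θ * ∑ i, x v i + (1 - θ) * ∑ i, x' v i := by
      rw [Finset.mul_sum, Finset.mul_sum, ← Finset.sum_add_distrib]
    rw [this]
    have := mul_le_mul_of_nonneg_left (h2 v hv) hθ0
    have := mul_le_mul_of_nonneg_left (h2' v hv) h1θ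
    linarith
  · intro i v hv s hs s' hs' hss
    have hA := h3 i v hv s hs s' hs' hss
    have hB := h3' i v hv s hs s' hs' hss
    have := mul_le_mul_of_nonneg_left hA hθ0
    have := mul_le_mul_of_nonneg_left hB h1θ
    dsimp only
    linarith
  · intro i v hv
    rw [envUbar_comb]
    have hA := mul_le_mul_of_nonneg_left (h4 i v hv) hθ0
    have hB := mul_le_mul_of_nonneg_left (h4' i v hv) h1θ
    dsimp only
    nlinarith

lemma envU_zero (S : Setting k) (i : Fin k) (v : Fin k → ℝ) :
    envU S (fun _ _ => (0 : ℝ)) i v = 0 := by simp [envU]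

lemma envUbar_zero (S : Setting k) (i : Fin k) (v : Fin k → ℝ) :
    envUbar S (fun _ _ => (0 : ℝ)) i v = 0 := by simp [envUbar, envU]

lemma feasible_zero (S : Setting k) {b : Fin k → ℝ} {ξ : Util k}
    (hb : ∀ i, 0 ≤ b i) (hξ : ∀ i v, 0 ≤ ξ i v) :
    Feasible S b ξ (fun _ _ => 0) := by
  refine ⟨fun v _ i => ⟨le_rfl, zero_le_one⟩, fun v _ => by simp,
    fun _ _ _ _ _ _ _ _ => le_rfl, fun i v _ => ?_⟩
  rw [envUbar_zero]
  exact add_nonneg (hb i) (hξ i v)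

lemma sum_prob (S : Setting k) : ∑ v ∈ profiles S, prob S v = 1 := by
  unfold profiles prob
  rw [← Finset.prod_univ_sum]
  simp [S.f_sum]

lemma obj_comb_ge (S : Setting k) {g : (Fin k → ℝ) → ℝ} (hg : ConcaveOn ℝ Set.univ g)
    (b : Fin k → ℝ) (ξ ξ' : Util k) (x x' : Alloc k)
    {θ : ℝ} (hθ0 : 0 ≤ θ) (hθ1 : θ ≤ 1) :
    θ * obj S g b ξ x + (1 - θ) * obj S g b ξ' x'
      ≤ obj S g b (fun j w => θ * ξ j w + (1 - θ) * ξ' j w)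
          (fun w j => θ * x w j + (1 - θ) * x' w j) := by
  unfold obj
  rw [Finset.mul_sum, Finset.mul_sum, ← Finset.sum_add_distrib]
  refine Finset.sum_le_sum fun v hv => ?_
  have hp := prob_nonneg S hv
  set L : ℝ := ∑ i, (v i * x v i - ξ i v) with hLdef
  set L' : ℝ := ∑ i, (v i * x' v i - ξ' i v) with hL'def
  set P : Fin k → ℝ := fun i => deltaB S x ξ v i + b i with hPdef
  set P' : Fin k → ℝ := fun i => deltaB S x' ξ' v i + b i with hP'def
  have hL'' : (∑ i, (v i * ((fun w j => θ * x w j + (1 - θ) * x' w j) v i)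
      - (θ * ξ i v + (1 - θ) * ξ' i v))) = θ * L + (1 - θ) * L' := by
    rw [hLdef, hL'def, Finset.mul_sum, Finset.mul_sum, ← Finset.sum_add_distrib]
    exact Finset.sum_congr rfl fun i _ => by ring
  have hP'' : (fun i => deltaB S (fun w j => θ * x w j + (1 - θ) * x' w j)
      (fun j w => θ * ξ j w + (1 - θ) * ξ' j w) v i + b i) = θ • P + (1 - θ) • P' := by
    funext i
    simp only [Pi.add_apply, Pi.smul_apply, smul_eq_mul, hPdef, hP'def, deltaB_comb]
    ring
  have h1θ : (0:ℝ) ≤ 1 - θ := by linarith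
  have hgP : θ * g P + (1 - θ) * g P' ≤ g (θ • P + (1 - θ) • P') := by
    have := hg.2 (Set.mem_univ P) (Set.mem_univ P') hθ0 h1θ (by ring)
    simpa [smul_eq_mul] using this
  calc θ * (prob S v * (L + g P)) + (1 - θ) * (prob S v * (L' + g P'))
      = prob S v * ((θ * L + (1 - θ) * L') + (θ * g P + (1 - θ) * g P')) := by ring
    _ ≤ prob S v * ((θ * L + (1 - θ) * L') + g (θ • P + (1 - θ) • P')) := by
        apply mul_le_mul_of_nonneg_left _ hp
        linarith
    _ = prob S v * ((∑ i, (v i * ((fun w j => θ * x w j + (1 - θ) * x' w j) v i)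
          - (θ * ξ i v + (1 - θ) * ξ' i v)))
        + g (fun i => deltaB S (fun w j => θ * x w j + (1 - θ) * x' w j)
            (fun j w => θ * ξ j w + (1 - θ) * ξ' j w) v i + b i)) := by
        rw [hL'', hP'']

lemma bddAbove_objSet (S : Setting k) {g : (Fin k → ℝ) → ℝ} (hg : ConcaveOn ℝ Set.univ g)
    (b : Fin k → ℝ) (hb : ∀ i, 0 ≤ b i) (ξ : Util k) (hξ0 : ∀ i v, 0 ≤ ξ i v) :
    BddAbove {r : ℝ | ∃ x : Alloc k, Feasible S b ξ x ∧ r = obj S g b ξ x} := by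
  classical
  -- constants
  set C : ℝ := ∑ i, ∑ s ∈ S.V i, s with hCdef
  have hC0 : 0 ≤ C :=
    Finset.sum_nonneg fun i _ => Finset.sum_nonneg fun s hs => S.V_nonneg i s hs
  have hsC : ∀ i : Fin k, ∀ s ∈ S.V i, s ≤ C := by
    intro i s hs
    calc s ≤ ∑ s' ∈ S.V i, s' :=
          Finset.single_le_sum (fun t ht => S.V_nonneg i t ht) hs
      _ ≤ C := Finset.single_le_sum
          (f := fun j => ∑ s' ∈ S.V j, s')
          (fun j _ => Finset.sum_nonneg fun t ht => S.V_nonneg j t ht)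
          (Finset.mem_univ i)
  set E : ℝ := (∑ i, ((S.V i).card : ℝ)) * C with hEdef
  have hE0 : 0 ≤ E :=
    mul_nonneg (Finset.sum_nonneg fun i _ => by positivity) hC0
  set D : ℝ := ∑ v ∈ profiles S, ∑ i, ξ i v with hDdef
  have hD0 : 0 ≤ D :=
    Finset.sum_nonneg fun v _ => Finset.sum_nonneg fun i _ => hξ0 i v
  have hξD : ∀ v ∈ profiles S, ∀ i, ξ i v ≤ D := by
    intro v hv i
    calc ξ i v ≤ ∑ j, ξ j v :=
          Finset.single_le_sum (fun j _ => hξ0 j v) (Finset.mem_univ i)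
      _ ≤ D := Finset.single_le_sum (f := fun w => ∑ j, ξ j w)
          (fun w _ => Finset.sum_nonneg fun j _ => hξ0 j w) hv
  set B : ℝ := ∑ i, b i with hBdef
  have hB0 : 0 ≤ B := Finset.sum_nonneg fun i _ => hb i
  have hbB : ∀ i, b i ≤ B := fun i =>
    Finset.single_le_sum (fun j _ => hb j) (Finset.mem_univ i)
  -- bounds on envU, envUbar for feasible x
  have henvU : ∀ x : Alloc k, Feasible S b ξ x → ∀ v ∈ profiles S, ∀ i,
      0 ≤ envU S x i v ∧ envU S x i v ≤ E := by
    intro x hx v hv i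
    have hterm : ∀ s ∈ (S.V i).filter (fun s => s ≤ v i),
        0 ≤ x (Function.update v i s) i * (s - predV S i s) ∧
        x (Function.update v i s) i * (s - predV S i s) ≤ C := by
      intro s hs
      have hsV : s ∈ S.V i := (Finset.mem_filter.1 hs).1
      have hmem := update_mem_profiles S hv hsV
      obtain ⟨hx0, hx1⟩ := hx.1 _ hmem i
      have hd0 : 0 ≤ s - predV S i s := by
        have := predV_le S hsV; linarith
      have hdC : s - predV S i s ≤ C := by
        have := predV_nonneg S i s
        have := hsC i s hsV
        linarith
      constructor
      · exact mul_nonneg hx0 hd0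
      · calc x (Function.update v i s) i * (s - predV S i s)
            ≤ 1 * C := mul_le_mul hx1 hdC hd0 zero_le_one
          _ = C := one_mul C
    constructor
    · exact Finset.sum_nonneg fun s hs => (hterm s hs).1
    · calc envU S x i v
          ≤ ((S.V i).filter (fun s => s ≤ v i)).card • C :=
            Finset.sum_le_card_nsmul _ _ C fun s hs => (hterm s hs).2
        _ = (((S.V i).filter (fun s => s ≤ v i)).card : ℝ) * C := by
            rw [nsmul_eq_mul]
        _ ≤ ((S.V i).card : ℝ) * C := by
            apply mul_le_mul_of_nonneg_right _ hC0
            exact_mod_cast Finset.card_le_card (Finset.filter_subset _ _)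
        _ ≤ E := by
            apply mul_le_mul_of_nonneg_right _ hC0
            exact Finset.single_le_sum
              (f := fun j => ((S.V j).card : ℝ))
              (fun j _ => by positivity) (Finset.mem_univ i)
  have henvUbar : ∀ x : Alloc k, Feasible S b ξ x → ∀ v ∈ profiles S, ∀ i,
      0 ≤ envUbar S x i v ∧ envUbar S x i v ≤ E := by
    intro x hx v hv i
    have hterm : ∀ s ∈ S.V i,
        0 ≤ S.f i s * envU S x i (Function.update v i s) ∧
        S.f i s * envU S x i (Function.update v i s) ≤ S.f i s * E := by
      intro s hs
      have hf := (S.f_pos i s hs).le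
      obtain ⟨h0, hE⟩ := henvU x hx _ (update_mem_profiles S hv hs) i
      exact ⟨mul_nonneg hf h0, mul_le_mul_of_nonneg_left hE hf⟩
    constructor
    · exact Finset.sum_nonneg fun s hs => (hterm s hs).1
    · calc envUbar S x i v ≤ ∑ s ∈ S.V i, S.f i s * E :=
          Finset.sum_le_sum fun s hs => (hterm s hs).2
        _ = (∑ s ∈ S.V i, S.f i s) * E := by rw [Finset.sum_mul]
        _ = E := by rw [S.f_sum i, one_mul]
  -- compact box
  set lo : Fin k → ℝ := fun _ => -E with hlodef
  set hi : Fin k → ℝ := fun _ => E + D + B with hhidef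
  have hlohi : lo ≤ hi := fun i => by
    simp only [hlodef, hhidef]; linarith
  have hKc : IsCompact (Set.Icc lo hi) := isCompact_Icc
  have hKne : (Set.Icc lo hi).Nonempty := Set.nonempty_Icc.2 hlohi
  have hgc : Continuous g :=
    continuousOn_univ.mp (hg.continuousOn isOpen_univ)
  obtain ⟨z, hz, hzmax⟩ := hKc.exists_isMaxOn hKne hgc.continuousOn
  -- the bound
  refine ⟨(k : ℝ) * C + g z, ?_⟩
  rintro r ⟨x, hxf, rfl⟩
  have hinner : ∀ v ∈ profiles S,
      (∑ i, (v i * x v i - ξ i v)) + g (fun i => deltaB S x ξ v i + b i)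
        ≤ (k : ℝ) * C + g z := by
    intro v hv
    have hsum : (∑ i, (v i * x v i - ξ i v)) ≤ (k : ℝ) * C := by
      calc (∑ i, (v i * x v i - ξ i v)) ≤ ∑ _i : Fin k, C := by
            refine Finset.sum_le_sum fun i _ => ?_
            have hvi : v i ∈ S.V i := (mem_profiles_iff S).1 hv i
            have hv0 : 0 ≤ v i := S.V_nonneg i _ hvi
            obtain ⟨hx0, hx1⟩ := hxf.1 v hv i
            have : v i * x v i ≤ v i := by nlinarith
            have := hξ0 i v
            have := hsC i _ hvi
            linarith
        _ = (k : ℝ) * C := by simp [mul_comm]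
    have hmemK : (fun i => deltaB S x ξ v i + b i) ∈ Set.Icc lo hi := by
      constructor <;> intro i <;>
        · obtain ⟨hu0, huE⟩ := henvU x hxf v hv i
          obtain ⟨hub0, hubE⟩ := henvUbar x hxf v hv i
          have := hξ0 i v
          have := hξD v hv i
          have := hb i
          have := hbB i
          simp only [hlodef, hhidef, deltaB]
          linarith
    have hgle : g (fun i => deltaB S x ξ v i + b i) ≤ g z := hzmax hmemK
    linarith
  calc obj S g b ξ x
      ≤ ∑ v ∈ profiles S, prob S v * ((k : ℝ) * C + g z) := by
        refine Finset.sum_le_sum fun v hv => ?_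
        exact mul_le_mul_of_nonneg_left (hinner v hv) (prob_nonneg S hv)
    _ = (∑ v ∈ profiles S, prob S v) * ((k : ℝ) * C + g z) := by
        rw [Finset.sum_mul]
    _ = (k : ℝ) * C + g z := by rw [sum_prob S, one_mul]

/-- For every concave `g : ℝ^k → ℝ` and fixed `b ∈ (ℝ≥0)^k`, the map
`ξ ↦ G(g, b, ξ)` is concave on the convex set of valid families `ξ`. -/
theorem G_concave_in_xi
    (k : ℕ) (hk : 1 ≤ k) (S : Setting k)
    (g : (Fin k → ℝ) → ℝ) (hg : ConcaveOn ℝ Set.univ g)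
    (b : Fin k → ℝ) (hb : ∀ i, 0 ≤ b i)
    (ξ ξ' : Util k) (hξ : ValidXi S ξ) (hξ' : ValidXi S ξ')
    (θ : ℝ) (hθ0 : 0 ≤ θ) (hθ1 : θ ≤ 1) :
    θ * G S g b ξ + (1 - θ) * G S g b ξ'
      ≤ G S g b (fun i v => θ * ξ i v + (1 - θ) * ξ' i v) := by
  have h1θ : 0 ≤ 1 - θ := by linarith
  set ξ'' : Util k := fun i v => θ * ξ i v + (1 - θ) * ξ' i v with hξ''def
  have hξ''0 : ∀ i v, 0 ≤ ξ'' i v := fun i v =>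
    add_nonneg (mul_nonneg hθ0 (hξ.1 i v)) (mul_nonneg h1θ (hξ'.1 i v))
  set A : Set ℝ := {r | ∃ x : Alloc k, Feasible S b ξ x ∧ r = obj S g b ξ x} with hA_def
  set A' : Set ℝ := {r | ∃ x : Alloc k, Feasible S b ξ' x ∧ r = obj S g b ξ' x} with hA'_def
  set A'' : Set ℝ := {r | ∃ x : Alloc k, Feasible S b ξ'' x ∧ r = obj S g b ξ'' x} with hA''_def
  have hA : A.Nonempty := ⟨_, ⟨_, feasible_zero S hb hξ.1, rfl⟩⟩
  have hA' : A'.Nonempty := ⟨_, ⟨_, feasible_zero S hb hξ'.1, rfl⟩⟩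
  have hbdd : BddAbove A'' := bddAbove_objSet S hg b hb ξ'' hξ''0
  have key : ∀ r ∈ A, ∀ r' ∈ A', θ * r + (1 - θ) * r' ≤ sSup A'' := by
    rintro r ⟨x, hx, rfl⟩ r' ⟨x', hx', rfl⟩
    have hfeas := feasible_comb S hx hx' hθ0 hθ1
    have hobj := obj_comb_ge S hg b ξ ξ' x x' hθ0 hθ1
    exact hobj.trans (le_csSup hbdd ⟨_, hfeas, rfl⟩)
  have hG : G S g b ξ = sSup A := rfl
  have hG' : G S g b ξ' = sSup A' := rfl
  have hG'' : G S g b ξ'' = sSup A'' := rfl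
  rw [hG, hG', hG'']
  refine le_of_forall_pos_le_add ?_
  intro ε hε
  obtain ⟨r, hr, hrlt⟩ := exists_lt_of_lt_csSup hA
    (show sSup A - ε / 2 < sSup A by linarith)
  obtain ⟨r', hr', hrlt'⟩ := exists_lt_of_lt_csSup hA'
    (show sSup A' - ε / 2 < sSup A' by linarith)
  have hkey := key r hr r' hr'
  have h1 : θ * sSup A ≤ θ * (r + ε / 2) :=
    mul_le_mul_of_nonneg_left (by linarith) hθ0
  have h2 : (1 - θ) * sSup A' ≤ (1 - θ) * (r' + ε / 2) :=
    mul_le_mul_of_nonneg_left (by linarith) h1θ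
  have h3 : θ * (r + ε / 2) + (1 - θ) * (r' + ε / 2)
      = θ * r + (1 - θ) * r' + ε / 2 := by ring
  linarith

end SinglePeriod
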